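/- Let p be an odd prime. Then there is no polynomial g(X) ∈ F_p[X] satisfying g(X)^p − g(X) = X^{p^2+p} + X^{2p} + X^{p+1} + X^p. -/

import Mathlib

open Polynomial

/-- For an odd prime `p`, there is no polynomial `g ∈ F_p[X]` with
`g^p − g = X^{p²+p} + X^{2p} + X^{p+1} + X^p`. -/
theorem stmt_14 (p : ℕ) (hp : p.Prime) (hodd : Odd p) :
    ¬ ∃ g : Polynomial (ZMod p),
      g ^ p - g = X ^ (p ^ 2 + p) + X ^ (2 * p) + X ^ (p + 1) + X ^ p := by
  rintro ⟨g, hg⟩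
  haveI : Fact p.Prime := ⟨hp⟩
  have hp1 : 1 < p := hp.one_lt
  have hp0 : 0 < p := hp.pos
  have hs : p ^ 2 = p * p := sq p
  have hsq : 2 * p ≤ p * p := Nat.mul_le_mul_right p hp1
  -- g ^ p = expand p g
  have hfr : g ^ p = expand (ZMod p) p g := by
    rw [← Polynomial.map_frobenius_expand p g, ZMod.frobenius_zmod, Polynomial.map_id]
  have hndvd : ¬ p ∣ (p + 1) := by
    intro h
    have h1 : p ∣ 1 := (Nat.dvd_add_right (dvd_refl p)).mp h
    exact absurd (Nat.le_of_dvd one_pos h1) (by omega)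
  -- coefficient at p+1 : g.coeff (p+1) = -1
  have e1 : g.coeff (p + 1) = -1 := by
    have h := congrArg (fun q => Polynomial.coeff q (p + 1)) hg
    simp only [hfr, coeff_sub, coeff_expand hp0, coeff_add, coeff_X_pow] at h
    rw [if_neg hndvd, if_neg (by omega : ¬ p + 1 = p ^ 2 + p),
      if_neg (by omega : ¬ p + 1 = 2 * p), if_neg (by omega : ¬ p + 1 = p)] at h
    simp only [if_true] at h
    linear_combination -h
  -- degree bound: natDegree g ≤ p + 1
  have hne : g.coeff (p + 1) ≠ 0 := by
    rw [e1]; exact neg_ne_zero.mpr one_ne_zero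
  have hdg : p + 1 ≤ g.natDegree := le_natDegree_of_ne_zero hne
  have hlt : g.natDegree < (g ^ p).natDegree := by
    rw [natDegree_pow]
    have : 1 * g.natDegree < p * g.natDegree :=
      Nat.mul_lt_mul_of_lt_of_le hp1 le_rfl (by omega)
    omega
  have hsub : (g ^ p - g).natDegree = p * g.natDegree := by
    rw [natDegree_sub_eq_left_of_natDegree_lt hlt, natDegree_pow]
  have hub : (X ^ (p ^ 2 + p) + X ^ (2 * p) + X ^ (p + 1) + X ^ p :
      (ZMod p)[X]).natDegree ≤ p ^ 2 + p := by
    refine le_trans (natDegree_add_le _ _) (max_le (le_trans (natDegree_add_le _ _)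
      (max_le (le_trans (natDegree_add_le _ _) (max_le ?_ ?_)) ?_)) ?_) <;>
      rw [natDegree_X_pow] <;> omega
  have hdle : g.natDegree ≤ p + 1 := by
    have : p * g.natDegree ≤ p * (p + 1) := by
      rw [← hsub, hg]; calc (X ^ (p ^ 2 + p) + X ^ (2 * p) + X ^ (p + 1) + X ^ p :
        (ZMod p)[X]).natDegree ≤ p ^ 2 + p := hub
        _ = p * (p + 1) := by ring
    exact Nat.le_of_mul_le_mul_left this hp0
  have hcz : g.coeff (p ^ 2 + p) = 0 :=
    coeff_eq_zero_of_natDegree_lt (by omega)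
  -- coefficient at p^2 + p
  have hdvd2 : p ∣ p ^ 2 + p := ⟨p + 1, by ring⟩
  have hdiv : (p ^ 2 + p) / p = p + 1 := by
    rw [show p ^ 2 + p = p * (p + 1) by ring, Nat.mul_div_cancel_left _ hp0]
  have e2 : (2 : ZMod p) = 0 := by
    have h := congrArg (fun q => Polynomial.coeff q (p ^ 2 + p)) hg
    simp only [hfr, coeff_sub, coeff_expand hp0, coeff_add, coeff_X_pow] at h
    rw [if_pos hdvd2, hdiv, if_neg (by omega : ¬ p ^ 2 + p = 2 * p),
      if_neg (by omega : ¬ p ^ 2 + p = p + 1), if_neg (by omega : ¬ p ^ 2 + p = p),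
      e1, hcz] at h
    simp only [if_true] at h
    linear_combination -h
  have hdvd : p ∣ 2 := by
    have : ((2 : ℕ) : ZMod p) = 0 := by exact_mod_cast e2
    exact (ZMod.natCast_eq_zero_iff 2 p).mp this
  have hp2 : p = 2 := (Nat.prime_dvd_prime_iff_eq hp Nat.prime_two).mp hdvd
  rw [hp2] at hodd
  exact (Nat.not_odd_iff_even.mpr even_two) hodd
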